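/- Fix real numbers Q_tol ∈ (0, 1), Q_z ∈ [0, 1], ε_c > 0, and ε_s > ε > 0 with Q_tol < 1 strictly. Define h₂(x) := -x·log₂(x) - (1-x)·log₂(1-x), and for each natural number L ≥ 4 set p_L := L^{-1/2}, m_L := p_L·L, k_L := (1-p_L)·L, μ_L := √( ((m_L + k_L)/(m_L·k_L)) · ((m_L + 1)/m_L) · ln(2/(ε_s - ε)) ), and r_L := (1-p_L)·[1 - h₂(Q_tol + μ_L) - h₂(Q_z)] - h₂(p_L) + (1/L)·(log₂(ε²·ε_c) - 2). Then r_L converges to 1 - h₂(Q_tol) - h₂(Q_z) as L → ∞. -/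

import Mathlib

open Filter Real

lemma binEnt_cont : Continuous (fun x : ℝ =>
    -x * Real.logb 2 x - (1 - x) * Real.logb 2 (1 - x)) := by
  have h : (fun x : ℝ => -x * Real.logb 2 x - (1 - x) * Real.logb 2 (1 - x))
      = fun x => (-(x * Real.log x) - ((1 - x) * Real.log (1 - x))) / Real.log 2 := by
    funext x
    unfold Real.logb
    ring
  rw [h]
  exact (Real.continuous_mul_log.neg.sub
    (Real.continuous_mul_log.comp (continuous_const.sub continuous_id))).div_const _

/-- The binary entropy function `h₂(x) = -x·log₂(x) - (1-x)·log₂(1-x)`. -/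
noncomputable def binEnt (x : ℝ) : ℝ :=
  -x * Real.logb 2 x - (1 - x) * Real.logb 2 (1 - x)

lemma continuous_binEnt : Continuous binEnt := binEnt_cont

lemma binEnt_zero : binEnt 0 = 0 := by simp [binEnt]

/-- With the verification fraction `p_L = L^{-1/2}`,
`m_L = p_L·L`, `k_L = (1-p_L)·L`, the statistical correction
`μ_L = √(((m_L+k_L)/(m_L·k_L))·((m_L+1)/m_L)·ln(2/(ε_s-ε)))`, the finite key rate
`r_L = (1-p_L)·[1 - h₂(Q_tol+μ_L) - h₂(Q_z)] - h₂(p_L) + (1/L)·(log₂(ε²ε_c) - 2)`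
converges to the asymptotic key rate `1 - h₂(Q_tol) - h₂(Q_z)` as `L → ∞`. -/
theorem stmt_2 (Qtol Qz εc εs ε : ℝ)
    (hQtol0 : 0 < Qtol) (hQtol1 : Qtol < 1) (hQz0 : 0 ≤ Qz) (hQz1 : Qz ≤ 1)
    (hεc : 0 < εc) (hε : 0 < ε) (hεεs : ε < εs) :
    Filter.Tendsto
      (fun L : ℕ =>
        let p : ℝ := (L : ℝ) ^ (-(1 / 2) : ℝ)
        let m : ℝ := p * (L : ℝ)
        let k : ℝ := (1 - p) * (L : ℝ)
        let μ : ℝ :=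
          Real.sqrt (((m + k) / (m * k)) * ((m + 1) / m) * Real.log (2 / (εs - ε)))
        (1 - p) * (1 - binEnt (Qtol + μ) - binEnt Qz) - binEnt p
          + (1 / (L : ℝ)) * (Real.logb 2 (ε ^ 2 * εc) - 2))
      Filter.atTop (nhds (1 - binEnt Qtol - binEnt Qz)) := by
  set C : ℝ := Real.log (2 / (εs - ε)) with hC
  set p : ℕ → ℝ := fun L => (L : ℝ) ^ (-(1 / 2) : ℝ) with hpdef
  have hp : Tendsto p atTop (nhds 0) :=
    (tendsto_rpow_neg_atTop (by norm_num)).comp tendsto_natCast_atTop_atTop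
  -- p L < 1 eventually and m, k positivity
  have hev : ∀ᶠ L : ℕ in atTop, 0 < p L * L ∧ 0 < (1 - p L) * L := by
    have h1 : ∀ᶠ L : ℕ in atTop, p L < 1 := hp.eventually (eventually_lt_nhds one_pos)
    filter_upwards [h1, eventually_ge_atTop 1] with L hL1 hL2
    have hL0 : (0 : ℝ) < L := by exact_mod_cast hL2
    have hp0 : 0 < p L := Real.rpow_pos_of_pos hL0 _
    exact ⟨mul_pos hp0 hL0, mul_pos (by linarith) hL0⟩
  -- 1/m → 0
  have hm : Tendsto (fun L : ℕ => 1 / (p L * L)) atTop (nhds 0) := by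
    have heq : ∀ᶠ L : ℕ in atTop, 1 / (p L * L) = p L := by
      filter_upwards [eventually_ge_atTop 1] with L hL
      have hL0 : (0 : ℝ) < L := by exact_mod_cast hL
      have h1 : p L * L = (L : ℝ) ^ ((1 : ℝ) / 2) := by
        rw [hpdef]
        rw [show (L : ℝ) ^ (-(1 / 2) : ℝ) * (L : ℝ)
            = (L : ℝ) ^ (-(1 / 2) : ℝ) * (L : ℝ) ^ (1 : ℝ) by rw [Real.rpow_one],
          ← Real.rpow_add hL0]
        norm_num
      calc 1 / (p L * L) = ((L : ℝ) ^ ((1 : ℝ) / 2))⁻¹ := by rw [h1, one_div]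
        _ = (L : ℝ) ^ (-(1 / 2) : ℝ) := by rw [← Real.rpow_neg hL0.le]
        _ = p L := rfl
    exact Tendsto.congr' (Filter.EventuallyEq.symm heq) hp
  -- 1/k → 0
  have hk : Tendsto (fun L : ℕ => 1 / ((1 - p L) * L)) atTop (nhds 0) := by
    have h1 : Tendsto (fun L : ℕ => 1 - p L) atTop (nhds 1) := by
      have := (tendsto_const_nhds : Tendsto (fun _ : ℕ => (1:ℝ)) atTop (nhds 1)).sub hp
      simpa using this
    have hktop : Tendsto (fun L : ℕ => (1 - p L) * L) atTop atTop :=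
      Filter.Tendsto.pos_mul_atTop one_pos h1
        (tendsto_natCast_atTop_atTop : Tendsto (fun L : ℕ => (L:ℝ)) atTop atTop)
    exact (tendsto_inv_atTop_zero.comp hktop).congr (fun L => (one_div _).symm)
  -- μ → 0
  have hμ : Tendsto (fun L : ℕ =>
      Real.sqrt (((p L * L + (1 - p L) * L) / ((p L * L) * ((1 - p L) * L)))
        * ((p L * L + 1) / (p L * L)) * C)) atTop (nhds 0) := by
    have heq : ∀ᶠ L : ℕ in atTop,
        ((p L * L + (1 - p L) * L) / ((p L * L) * ((1 - p L) * L)))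
          * ((p L * L + 1) / (p L * L)) * C
        = (1 / (p L * L) + 1 / ((1 - p L) * L)) * (1 + 1 / (p L * L)) * C := by
      filter_upwards [hev] with L ⟨hm0, hk0⟩
      have hp0 : p L ≠ 0 := fun h => by simp [h] at hm0
      have hL0 : (L : ℝ) ≠ 0 := fun h => by simp [h] at hm0
      have h1p : 1 - p L ≠ 0 := fun h => by simp [h] at hk0
      field_simp
      ring_nf
      try tauto
    have hinner : Tendsto (fun L : ℕ =>
        (1 / (p L * L) + 1 / ((1 - p L) * L)) * (1 + 1 / (p L * L)) * C)
        atTop (nhds 0) := by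
      have := ((hm.add hk).mul
        ((tendsto_const_nhds : Tendsto (fun _ : ℕ => (1:ℝ)) atTop (nhds 1)).add hm)).mul
        (tendsto_const_nhds : Tendsto (fun _ : ℕ => C) atTop (nhds C))
      simpa using this
    have := (Real.continuous_sqrt.tendsto 0).comp
      (Tendsto.congr' (Filter.EventuallyEq.symm heq) hinner)
    simpa [Function.comp_def] using this
  -- assemble
  have hbinμ : Tendsto (fun L : ℕ => binEnt (Qtol +
      Real.sqrt (((p L * L + (1 - p L) * L) / ((p L * L) * ((1 - p L) * L)))
        * ((p L * L + 1) / (p L * L)) * C))) atTop (nhds (binEnt Qtol)) := by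
    have := (continuous_binEnt.tendsto Qtol).comp
      (by simpa using (tendsto_const_nhds.add hμ : Tendsto _ atTop (nhds (Qtol + 0))))
    exact this
  have hbinp : Tendsto (fun L : ℕ => binEnt (p L)) atTop (nhds 0) := by
    have := (continuous_binEnt.tendsto 0).comp hp
    simpa [binEnt_zero, Function.comp_def] using this
  have hinv : Tendsto (fun L : ℕ => 1 / (L : ℝ)) atTop (nhds 0) := by
    exact (tendsto_inv_atTop_zero.comp
      (tendsto_natCast_atTop_atTop : Tendsto (fun L : ℕ => (L:ℝ)) atTop atTop)).congr
      (fun L => (one_div _).symm)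
  have final : Tendsto (fun L : ℕ =>
      (1 - p L) * (1 - binEnt (Qtol +
        Real.sqrt (((p L * L + (1 - p L) * L) / ((p L * L) * ((1 - p L) * L)))
          * ((p L * L + 1) / (p L * L)) * C)) - binEnt Qz) - binEnt (p L)
        + (1 / (L : ℝ)) * (Real.logb 2 (ε ^ 2 * εc) - 2))
      atTop (nhds (1 - binEnt Qtol - binEnt Qz)) := by
    have c1 : Tendsto (fun _ : ℕ => (1:ℝ)) atTop (nhds 1) := tendsto_const_nhds
    have c2 : Tendsto (fun _ : ℕ => binEnt Qz) atTop (nhds (binEnt Qz)) := tendsto_const_nhds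
    have c3 : Tendsto (fun _ : ℕ => Real.logb 2 (ε ^ 2 * εc) - 2) atTop
        (nhds (Real.logb 2 (ε ^ 2 * εc) - 2)) := tendsto_const_nhds
    have h := (((c1.sub hp).mul ((c1.sub hbinμ).sub c2)).sub hbinp).add (hinv.mul c3)
    simpa using h
  exact final
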